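/- Let $p\in(1,+\infty)$ and $v\in L^p(\mathbb{R}^n)$. There exists a constant $C_{n,p}>0$ such that for every vector $h\in\mathbb{R}^n\setminus\{0\}$, every bounded open $\Omega'\subset\mathbb{R}^n$, and every $\rho\in(0,|h|]$, the translation difference satisfies $\|\tau_h v - v\|_{L^p(\Omega')}^p \leq C_{n,p}\,\frac{|h|^p}{\rho^{n+p}}\int_{B_\rho}\|\tau_y v - v\|_{L^p(\Omega'_{|h|})}^p\,dy$, where $\tau_h v(x) := v(x+h)$ and $\Omega'_{|h|} := \{x : \mathrm{dist}(x,\Omega') \le |h|\}$. -/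

import Mathlib

open MeasureTheory Metric Set
open scoped ENNReal NNReal

private lemma shift_lintegral {n : ℕ} (f : EuclideanSpace ℝ (Fin n) → ℝ≥0∞)
    (c : EuclideanSpace ℝ (Fin n)) (s : Set (EuclideanSpace ℝ (Fin n))) :
    ∫⁻ x in s, f (x + c) = ∫⁻ x in (fun x => x + c) '' s, f x :=
  (measurePreserving_add_right volume c).setLIntegral_comp_emb
    (MeasurableEquiv.addRight c).measurableEmbedding f s

private lemma two_rpow_bound {p : ℝ} (hp : 0 ≤ p) (a b : ℝ≥0∞) :
    (a + b) ^ p ≤ 2 ^ p * (a ^ p + b ^ p) := by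
  calc (a + b) ^ p ≤ (2 * max a b) ^ p := by
        apply ENNReal.rpow_le_rpow _ hp
        rw [two_mul]
        exact add_le_add (le_max_left a b) (le_max_right a b)
    _ = 2 ^ p * max a b ^ p := ENNReal.mul_rpow_of_nonneg _ _ hp
    _ ≤ 2 ^ p * (a ^ p + b ^ p) := by
        apply mul_le_mul_right
        rcases max_cases a b with ⟨h1, _⟩ | ⟨h1, _⟩ <;> rw [h1]
        · exact le_self_add
        · exact le_add_self

set_option maxHeartbeats 2000000 in
theorem stmt_16 (n : ℕ) (hn : 1 ≤ n) (p : ℝ) (hp : 1 < p)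
    (v : EuclideanSpace ℝ (Fin n) → ℝ) (hv : Measurable v)
    (hvLp : MemLp v (ENNReal.ofReal p) volume) :
    ∃ C : ℝ, 0 < C ∧ ∀ h : EuclideanSpace ℝ (Fin n), h ≠ 0 →
      ∀ Ω' : Set (EuclideanSpace ℝ (Fin n)), IsOpen Ω' → Bornology.IsBounded Ω' →
        ∀ ρ : ℝ, 0 < ρ → ρ ≤ ‖h‖ →
          (∫⁻ x in Ω', ENNReal.ofReal (|v (x + h) - v x| ^ p)) ≤
            ENNReal.ofReal (C * ‖h‖ ^ p / ρ ^ ((n : ℝ) + p)) *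
              ∫⁻ y in ball (0 : EuclideanSpace ℝ (Fin n)) ρ,
                ∫⁻ x in cthickening ‖h‖ Ω', ENNReal.ofReal (|v (x + y) - v x| ^ p) := by
  have hp0 : (0:ℝ) < p := one_pos.trans hp
  haveI : Nonempty (Fin n) := ⟨⟨0, hn⟩⟩
  set q : ℝ≥0∞ := ENNReal.ofReal p with hqdef
  have hq0 : q ≠ 0 := by simp [hqdef, ENNReal.ofReal_eq_zero, not_le, hp0]
  have hqt : q ≠ ∞ := ENNReal.ofReal_ne_top
  have hq1 : 1 ≤ q := by
    rw [hqdef, ← ENNReal.ofReal_one]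
    exact ENNReal.ofReal_le_ofReal hp.le
  have hqr : q.toReal = p := ENNReal.toReal_ofReal hp0.le
  set c₁ : ℝ := (volume (ball (0 : EuclideanSpace ℝ (Fin n)) 1)).toReal with hc₁def
  have hc₁ : 0 < c₁ :=
    ENNReal.toReal_pos (measure_ball_pos volume _ one_pos).ne' measure_ball_lt_top.ne
  have h8p : (0:ℝ) < 8 ^ p := Real.rpow_pos_of_pos (by norm_num) p
  refine ⟨2 * 8 ^ p * 4 ^ n / c₁, by positivity, ?_⟩
  intro h hne Ω' hΩo hΩb ρ hρ hρh
  have hr : (0:ℝ) < ‖h‖ := lt_of_lt_of_le hρ hρh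
  set A : Set (EuclideanSpace ℝ (Fin n)) := cthickening ‖h‖ Ω' with hA
  have hkey : ∀ r : ℝ, ENNReal.ofReal (|r| ^ p) = (‖r‖₊ : ℝ≥0∞) ^ p := fun r => by
    rw [← enorm_eq_nnnorm, Real.enorm_eq_ofReal_abs, ← ENNReal.ofReal_rpow_of_nonneg (abs_nonneg r) hp0.le]
  simp only [hkey]
  -- the number of small steps
  set N : ℕ := ⌈4 * ‖h‖ / (3 * ρ)⌉₊ with hNdef
  have h3ρ : (0:ℝ) < 3 * ρ := by linarith
  have hN1 : 1 ≤ N := Nat.one_le_ceil_iff.mpr (by positivity)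
  have hN0 : (0:ℝ) < (N:ℝ) := by exact_mod_cast hN1
  have hNge : 4 * ‖h‖ / (3 * ρ) ≤ (N:ℝ) := Nat.le_ceil _
  have hNlt : (N:ℝ) < 4 * ‖h‖ / (3 * ρ) + 1 := Nat.ceil_lt_add_one (by positivity)
  have hNρ : (N:ℝ) * ρ ≤ 4 * ‖h‖ := by
    have h1 : ((N:ℝ) - 1) * (3 * ρ) < 4 * ‖h‖ := by
      rw [← lt_div_iff₀ h3ρ]; linarith
    nlinarith [hρ, hρh, hr]
  set δ : EuclideanSpace ℝ (Fin n) := ((N:ℝ))⁻¹ • h with hδdef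
  have hδnorm : ‖δ‖ = ‖h‖ / N := by
    rw [hδdef, norm_smul, norm_inv, Real.norm_natCast, inv_mul_eq_div]
  have hδle : ‖δ‖ ≤ 3 * ρ / 4 := by
    rw [hδnorm, div_le_iff₀ hN0]
    have h2 := (div_le_iff₀ h3ρ).mp hNge
    linarith
  have hρ4 : ρ / 4 ≤ ‖h‖ / N := by
    rw [div_le_div_iff₀ (by norm_num) hN0]; linarith
  -- inclusion of translates
  have himg : ∀ c : EuclideanSpace ℝ (Fin n), ‖c‖ ≤ ‖h‖ →
      ((fun x => x + c) '' Ω') ⊆ A := by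
    rintro c hc x ⟨z, hz, rfl⟩
    exact mem_cthickening_of_dist_le (z + c) z ‖h‖ Ω' hz
      (by rw [dist_eq_norm, add_sub_cancel_left]; exact hc)
  -- eLpNorm basics
  have eL_eq : ∀ (f : EuclideanSpace ℝ (Fin n) → ℝ) (s : Set (EuclideanSpace ℝ (Fin n))),
      eLpNorm f q (volume.restrict s) = (∫⁻ x in s, (‖f x‖₊ : ℝ≥0∞) ^ p) ^ p⁻¹ := by
    intro f s
    simp only [eLpNorm_eq_lintegral_rpow_enorm_toReal hq0 hqt, hqr, one_div, enorm_eq_nnnorm]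
  have eL_pow : ∀ (f : EuclideanSpace ℝ (Fin n) → ℝ) (s : Set (EuclideanSpace ℝ (Fin n))),
      (eLpNorm f q (volume.restrict s)) ^ p = ∫⁻ x in s, (‖f x‖₊ : ℝ≥0∞) ^ p := by
    intro f s
    rw [eL_eq, ENNReal.rpow_inv_rpow hp0.ne']
  have hshift : ∀ (f : EuclideanSpace ℝ (Fin n) → ℝ) (c : EuclideanSpace ℝ (Fin n))
      (s : Set (EuclideanSpace ℝ (Fin n))),
      eLpNorm (fun x => f (x + c)) q (volume.restrict s)
        = eLpNorm f q (volume.restrict ((fun x => x + c) '' s)) := by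
    intro f c s
    rw [eL_eq, eL_eq]
    congr 1
    exact shift_lintegral (fun x => (‖f x‖₊ : ℝ≥0∞) ^ p) c s
  have hmeas : ∀ z : EuclideanSpace ℝ (Fin n), Measurable (fun x => v (x + z) - v x) :=
    fun z => (hv.comp (measurable_id.add_const z)).sub hv
  -- the averaged quantity
  set F : EuclideanSpace ℝ (Fin n) → ℝ≥0∞ :=
    fun z => ∫⁻ x in A, (‖v (x + z) - v x‖₊ : ℝ≥0∞) ^ p with hFdef
  have hF : Measurable F := by
    apply Measurable.lintegral_prod_right'
      (f := fun zx : (EuclideanSpace ℝ (Fin n)) × (EuclideanSpace ℝ (Fin n)) =>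
        (‖v (zx.2 + zx.1) - v zx.2‖₊ : ℝ≥0∞) ^ p)
    exact (((hv.comp (measurable_snd.add measurable_fst)).sub
      (hv.comp measurable_snd)).nnnorm.coe_nnreal_ennreal).pow measurable_const
  -- pointwise-in-y claim
  have claim : ∀ y ∈ ball (0 : EuclideanSpace ℝ (Fin n)) (ρ/4),
      (∫⁻ x in Ω', (‖v (x + h) - v x‖₊ : ℝ≥0∞) ^ p) ≤
        ((2 * (N:ℝ≥0∞))) ^ p * (F (δ - y) + F y) := by
    intro y hy
    rw [mem_ball, dist_zero_right] at hy
    set w : EuclideanSpace ℝ (Fin n) → ℝ := fun x => v (x + (δ - y)) - v x with hw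
    set d : EuclideanSpace ℝ (Fin n) → ℝ := fun x => v (x + y) - v x with hd
    set g : EuclideanSpace ℝ (Fin n) → ℝ := fun x => v (x + δ) - v x with hg
    have step1 : eLpNorm (fun x => v (x + h) - v x) q (volume.restrict Ω') ≤
        (N : ℝ≥0∞) * (eLpNorm w q (volume.restrict A) + eLpNorm d q (volume.restrict A)) := by
      have hfun : (fun x : EuclideanSpace ℝ (Fin n) => v (x + h) - v x)
          = ∑ k ∈ Finset.range N, (fun x => g (x + (k:ℝ) • δ)) := by
        funext x
        rw [Finset.sum_apply]
        have hterm : ∀ k : ℕ, g (x + (k:ℝ) • δ)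
            = v (x + (((k+1 : ℕ)):ℝ) • δ) - v (x + (k:ℝ) • δ) := by
          intro k
          have harg : x + (k:ℝ) • δ + δ = x + (((k+1 : ℕ)):ℝ) • δ := by
            push_cast
            module
          simp only [hg]
          rw [harg]
        simp only [hterm]
        rw [Finset.sum_range_sub (fun k => v (x + (k:ℝ) • δ))]
        have h1 : x + (N:ℝ) • δ = x + h := by
          rw [hδdef, smul_inv_smul₀ hN0.ne']
        have h2 : x + ((0:ℕ):ℝ) • δ = x := by simp
        rw [h1, h2]
      calc eLpNorm (fun x => v (x + h) - v x) q (volume.restrict Ω')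
          = eLpNorm (∑ k ∈ Finset.range N, (fun x => g (x + (k:ℝ) • δ))) q
              (volume.restrict Ω') := by rw [hfun]
        _ ≤ ∑ k ∈ Finset.range N,
              eLpNorm (fun x => g (x + (k:ℝ) • δ)) q (volume.restrict Ω') :=
            eLpNorm_sum_le
              (fun k _ => ((hmeas δ).comp (measurable_id.add_const _)).aestronglyMeasurable) hq1
        _ ≤ ∑ _k ∈ Finset.range N,
              (eLpNorm w q (volume.restrict A) + eLpNorm d q (volume.restrict A)) := by
            apply Finset.sum_le_sum
            intro k hk
            have hkN : (k:ℝ) ≤ (N:ℝ) - 1 := by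
              have h1 : k + 1 ≤ N := Finset.mem_range.mp hk
              have h2 := (Nat.cast_le (α := ℝ)).mpr h1
              push_cast at h2; linarith
            have hc1 : ‖(k:ℝ) • δ‖ ≤ ‖h‖ - ‖h‖ / N := by
              rw [norm_smul, Real.norm_natCast, hδnorm]
              have h2 : (k:ℝ) * (‖h‖/N) ≤ ((N:ℝ)-1) * (‖h‖/N) :=
                mul_le_mul_of_nonneg_right hkN (by positivity)
              have h3 : ((N:ℝ)-1) * (‖h‖/N) = ‖h‖ - ‖h‖/N := by
                field_simp
              linarith
            have hhN : 0 ≤ ‖h‖ / N := by positivity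
            have hcA : ‖(k:ℝ) • δ‖ ≤ ‖h‖ := by linarith
            have hcyA : ‖(k:ℝ) • δ + y‖ ≤ ‖h‖ := by
              calc ‖(k:ℝ) • δ + y‖ ≤ ‖(k:ℝ) • δ‖ + ‖y‖ := norm_add_le _ _
                _ ≤ (‖h‖ - ‖h‖/N) + ρ/4 := add_le_add hc1 hy.le
                _ ≤ ‖h‖ := by linarith
            have hgsplit : g = fun u => w (u + y) + d u := by
              funext u
              simp only [hg, hw, hd]
              have harg : u + y + (δ - y) = u + δ := by abel
              rw [harg]; ring
            calc eLpNorm (fun x => g (x + (k:ℝ) • δ)) q (volume.restrict Ω')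
                = eLpNorm g q (volume.restrict ((fun x => x + (k:ℝ) • δ) '' Ω')) :=
                  hshift g _ Ω'
              _ ≤ eLpNorm (fun u => w (u + y)) q
                    (volume.restrict ((fun x => x + (k:ℝ) • δ) '' Ω'))
                  + eLpNorm d q (volume.restrict ((fun x => x + (k:ℝ) • δ) '' Ω')) := by
                  rw [hgsplit]
                  exact eLpNorm_add_le
                    ((hmeas _).comp (measurable_id.add_const y)).aestronglyMeasurable
                    (hmeas y).aestronglyMeasurable hq1
              _ ≤ eLpNorm w q (volume.restrict A) + eLpNorm d q (volume.restrict A) := by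
                  apply add_le_add
                  · rw [hshift w y _]
                    apply eLpNorm_mono_measure
                    apply Measure.restrict_mono _ le_rfl
                    have him : ((fun u => u + y) '' ((fun x => x + (k:ℝ) • δ) '' Ω'))
                        = (fun x => x + ((k:ℝ) • δ + y)) '' Ω' := by
                      rw [← image_comp]
                      apply image_congr
                      intro x _
                      show x + (k:ℝ) • δ + y = x + ((k:ℝ) • δ + y)
                      abel
                    rw [him]
                    exact himg _ hcyA
                  · apply eLpNorm_mono_measure
                    exact Measure.restrict_mono (himg _ hcA) le_rfl
        _ = (N : ℝ≥0∞) * (eLpNorm w q (volume.restrict A)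
              + eLpNorm d q (volume.restrict A)) := by
            rw [Finset.sum_const, Finset.card_range, nsmul_eq_mul]
    -- raise to the power p
    have h1 : (∫⁻ x in Ω', (‖v (x + h) - v x‖₊ : ℝ≥0∞) ^ p)
        = (eLpNorm (fun x => v (x + h) - v x) q (volume.restrict Ω')) ^ p :=
      (eL_pow _ _).symm
    rw [h1]
    calc (eLpNorm (fun x => v (x + h) - v x) q (volume.restrict Ω')) ^ p
        ≤ ((N : ℝ≥0∞) * (eLpNorm w q (volume.restrict A)
            + eLpNorm d q (volume.restrict A))) ^ p := ENNReal.rpow_le_rpow step1 hp0.le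
      _ = (N : ℝ≥0∞) ^ p * (eLpNorm w q (volume.restrict A)
            + eLpNorm d q (volume.restrict A)) ^ p := ENNReal.mul_rpow_of_nonneg _ _ hp0.le
      _ ≤ (N : ℝ≥0∞) ^ p * (2 ^ p * ((eLpNorm w q (volume.restrict A)) ^ p
            + (eLpNorm d q (volume.restrict A)) ^ p)) :=
          mul_le_mul_right (two_rpow_bound hp0.le _ _) _
      _ = (2 * (N:ℝ≥0∞)) ^ p * ((eLpNorm w q (volume.restrict A)) ^ p
            + (eLpNorm d q (volume.restrict A)) ^ p) := by
          rw [ENNReal.mul_rpow_of_nonneg _ _ hp0.le, ← mul_assoc, mul_comm ((N:ℝ≥0∞)^p)]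
      _ = (2 * (N:ℝ≥0∞)) ^ p * (F (δ - y) + F y) := by
          rw [eL_pow w A, eL_pow d A]
  -- average the claim over the small ball
  set B4 := ball (0 : EuclideanSpace ℝ (Fin n)) (ρ/4) with hB4
  have hμB4 : volume B4 = ENNReal.ofReal ((ρ/4)^n * c₁) := by
    have hb := Measure.addHaar_ball (μ := (volume : Measure (EuclideanSpace ℝ (Fin n))))
      0 (by positivity : (0:ℝ) ≤ ρ/4)
    rw [hB4, hb, finrank_euclideanSpace_fin, ENNReal.ofReal_mul (by positivity)]
    congr 1
    exact (ENNReal.ofReal_toReal measure_ball_lt_top.ne).symm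
  have hB40 : volume B4 ≠ 0 := (measure_ball_pos volume _ (by positivity)).ne'
  have hB4t : volume B4 ≠ ∞ := measure_ball_lt_top.ne
  set I := ∫⁻ y in ball (0 : EuclideanSpace ℝ (Fin n)) ρ, F y with hI
  set X := ∫⁻ x in Ω', (‖v (x + h) - v x‖₊ : ℝ≥0∞) ^ p with hX
  have havg : X * volume B4 ≤ ((2 * (N:ℝ≥0∞)) ^ p * 2) * I := by
    have h1 : X * volume B4 = ∫⁻ _y in B4, X := (setLIntegral_const _ _).symm
    rw [h1]
    have hmg : Measurable (fun y : EuclideanSpace ℝ (Fin n) =>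
        (2 * (N:ℝ≥0∞)) ^ p * (F (δ - y) + F y)) :=
      (((hF.comp (measurable_const.sub measurable_id)).add hF).const_mul _)
    calc ∫⁻ _y in B4, X
        ≤ ∫⁻ y in B4, (2 * (N:ℝ≥0∞)) ^ p * (F (δ - y) + F y) :=
          setLIntegral_mono hmg claim
      _ = (2 * (N:ℝ≥0∞)) ^ p * ((∫⁻ y in B4, F (δ - y)) + ∫⁻ y in B4, F y) := by
          have hne2 : (2 * (N:ℝ≥0∞)) ^ p ≠ ∞ :=
            ENNReal.rpow_ne_top_of_nonneg hp0.le
              (ENNReal.mul_ne_top (by norm_num) (ENNReal.natCast_ne_top N))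
          have e1 : ∫⁻ y in B4, (2 * (N:ℝ≥0∞)) ^ p * (F (δ - y) + F y)
              = (2 * (N:ℝ≥0∞)) ^ p * ∫⁻ y in B4, (F (δ - y) + F y) :=
            lintegral_const_mul' _ _ hne2
          have e2 : ∫⁻ y in B4, (F (δ - y) + F y)
              = (∫⁻ y in B4, F (δ - y)) + ∫⁻ y in B4, F y :=
            lintegral_add_left (hF.comp (measurable_const.sub measurable_id)) _
          rw [e1, e2]
      _ ≤ (2 * (N:ℝ≥0∞)) ^ p * (I + I) := by
          apply mul_le_mul_right
          apply add_le_add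
          · have hrefl : ∫⁻ y in B4, F (δ - y)
                = ∫⁻ z in (fun y => δ - y) '' B4, F z :=
              (Measure.measurePreserving_sub_left volume δ).setLIntegral_comp_emb
                (MeasurableEquiv.subLeft δ).measurableEmbedding F B4
            rw [hrefl, hI]
            apply lintegral_mono_set
            rintro z ⟨y, hy, rfl⟩
            rw [hB4, mem_ball, dist_zero_right] at hy
            rw [mem_ball, dist_zero_right]
            calc ‖δ - y‖ ≤ ‖δ‖ + ‖y‖ := norm_sub_le _ _
              _ < 3*ρ/4 + ρ/4 := add_lt_add_of_le_of_lt hδle hy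
              _ = ρ := by ring
          · rw [hI]
            apply lintegral_mono_set
            exact ball_subset_ball (by linarith)
      _ = ((2 * (N:ℝ≥0∞)) ^ p * 2) * I := by rw [two_mul]; ring
  -- divide by the measure of the small ball
  have hdiv : X ≤ (((2 * (N:ℝ≥0∞)) ^ p * 2) / volume B4) * I := by
    have h1 : X ≤ ((2 * (N:ℝ≥0∞)) ^ p * 2) * I / volume B4 :=
      (ENNReal.le_div_iff_mul_le (Or.inl hB40) (Or.inl hB4t)).mpr havg
    calc X ≤ ((2 * (N:ℝ≥0∞)) ^ p * 2) * I / volume B4 := h1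
      _ = (((2 * (N:ℝ≥0∞)) ^ p * 2) / volume B4) * I := by
          rw [div_eq_mul_inv, div_eq_mul_inv]; ring
  refine hdiv.trans (mul_le_mul_left ?_ I)
  -- coefficient comparison
  have hcoef : ((2 * (N:ℝ≥0∞)) ^ p * 2) = ENNReal.ofReal ((2 * (N:ℝ))^p * 2) := by
    rw [ENNReal.ofReal_mul (by positivity), ← ENNReal.ofReal_rpow_of_nonneg (by positivity) hp0.le,
      ENNReal.ofReal_mul (by norm_num), ENNReal.ofReal_natCast, ENNReal.ofReal_ofNat]
  rw [hcoef, hμB4,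
    ← ENNReal.ofReal_div_of_pos (show (0:ℝ) < (ρ/4)^n * c₁ by positivity)]
  apply ENNReal.ofReal_le_ofReal
  -- the real-number inequality
  have hNle8 : 2*(N:ℝ) ≤ 8 * ‖h‖ / ρ := by
    rw [le_div_iff₀ hρ]; linarith
  have hpow : (2*(N:ℝ))^p ≤ (8 * ‖h‖ / ρ)^p :=
    Real.rpow_le_rpow (by positivity) hNle8 hp0.le
  have hsplit : (8 * ‖h‖ / ρ)^p = 8^p * ‖h‖^p / ρ^p := by
    rw [Real.div_rpow (by positivity) hρ.le, Real.mul_rpow (by norm_num) (norm_nonneg _)]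
  have hρnp : ρ^((n:ℝ)+p) = ρ^(n:ℕ) * ρ^p := by
    rw [Real.rpow_add hρ, Real.rpow_natCast]
  have hρp : (0:ℝ) < ρ^p := Real.rpow_pos_of_pos hρ p
  have hhp : (0:ℝ) < ‖h‖^p := Real.rpow_pos_of_pos hr p
  rw [hρnp]
  calc (2 * (N:ℝ))^p * 2 / ((ρ/4)^n * c₁)
      ≤ (8^p * ‖h‖^p / ρ^p) * 2 / ((ρ/4)^n * c₁) := by
        apply div_le_div_of_nonneg_right ?_ (by positivity)
        have h9 := hpow.trans_eq hsplit
        linarith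
    _ = 2 * 8 ^ p * 4 ^ n / c₁ * ‖h‖ ^ p / (ρ ^ n * ρ ^ p) := by
        rw [div_pow]
        field_simp
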